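/- Let H be a real Hilbert space, let T ∈ ℕ with T ≥ 1, let λ > 0, and let (m_i)_{i=0}^T and (s_i)_{i=0}^T be elements of H. Then T · Σ_{0≤i<T} ‖s_{i+1} − s_i‖² ≤ (1 + 4T/λ) · [ T · Σ_{0≤i<T} ‖m_{i+1} − m_i‖² + λ · Σ_{0≤i≤T} ‖m_i − s_i‖² ]. -/

import Mathlib

private lemma aux_wc (t a y e : ℝ) (ht : 0 < t) (ha : 0 ≤ a) (hy : 0 ≤ y)
    (he0 : 0 ≤ e) (he : e ≤ a + y) :
    e ^ 2 ≤ (1 + t) * a ^ 2 + (1 + 1 / t) * y ^ 2 := by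
  have h2 : e ^ 2 ≤ (a + y) ^ 2 := by nlinarith
  have h3 : 0 ≤ (1 / t) * (t * a - y) ^ 2 := by positivity
  have h4 : (1 / t) * (t * a - y) ^ 2 = t * a ^ 2 - 2 * a * y + (1 / t) * y ^ 2 := by
    field_simp
    ring
  nlinarith

/-- Length of a chain: for elements `(m_i)` and `(s_i)` of a real Hilbert
space, `T · Σ_{0≤i<T} ‖s_{i+1} − s_i‖² ≤ (1 + 4T/λ) · [T · Σ ‖m_{i+1} − m_i‖² + λ · Σ ‖m_i − s_i‖²]`. -/
theorem stmt_5 {H : Type*} [NormedAddCommGroup H] [InnerProductSpace ℝ H] [CompleteSpace H]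
    (T : ℕ) (hT : 1 ≤ T) (lam : ℝ) (hlam : 0 < lam) (m s : ℕ → H) :
    (T : ℝ) * ∑ i ∈ Finset.range T, ‖s (i + 1) - s i‖ ^ 2 ≤
      (1 + 4 * T / lam) *
        ((T : ℝ) * ∑ i ∈ Finset.range T, ‖m (i + 1) - m i‖ ^ 2
          + lam * ∑ i ∈ Finset.range (T + 1), ‖m i - s i‖ ^ 2) := by
  have hT0 : (0 : ℝ) < T := by exact_mod_cast hT
  set t : ℝ := 4 * T / lam with ht_def
  have ht : 0 < t := by positivity
  set d : ℕ → ℝ := fun i => ‖m i - s i‖ ^ 2 with hd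
  -- pointwise bound
  have hpt : ∀ i, ‖s (i + 1) - s i‖ ^ 2 ≤
      (1 + t) * ‖m (i + 1) - m i‖ ^ 2 + 2 * (1 + 1 / t) * (d i + d (i + 1)) := by
    intro i
    have htri : ‖s (i + 1) - s i‖ ≤ ‖m (i + 1) - m i‖ + (‖m i - s i‖ + ‖m (i + 1) - s (i + 1)‖) := by
      have : s (i + 1) - s i = (m (i + 1) - m i) + ((m i - s i) - (m (i + 1) - s (i + 1))) := by
        abel
      rw [this]
      calc ‖(m (i + 1) - m i) + ((m i - s i) - (m (i + 1) - s (i + 1)))‖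
          ≤ ‖m (i + 1) - m i‖ + ‖(m i - s i) - (m (i + 1) - s (i + 1))‖ := norm_add_le _ _
        _ ≤ ‖m (i + 1) - m i‖ + (‖m i - s i‖ + ‖m (i + 1) - s (i + 1)‖) := by
            gcongr; exact norm_sub_le _ _
    have h1 := aux_wc t ‖m (i + 1) - m i‖ (‖m i - s i‖ + ‖m (i + 1) - s (i + 1)‖)
      ‖s (i + 1) - s i‖ ht (norm_nonneg _) (by positivity) (norm_nonneg _) htri
    have h2 : (‖m i - s i‖ + ‖m (i + 1) - s (i + 1)‖) ^ 2 ≤ 2 * (d i + d (i + 1)) := by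
      simp only [hd]
      nlinarith [sq_nonneg (‖m i - s i‖ - ‖m (i + 1) - s (i + 1)‖)]
    have h3 : (0:ℝ) ≤ 1 + 1 / t := by positivity
    calc ‖s (i + 1) - s i‖ ^ 2
        ≤ (1 + t) * ‖m (i + 1) - m i‖ ^ 2
            + (1 + 1 / t) * (‖m i - s i‖ + ‖m (i + 1) - s (i + 1)‖) ^ 2 := h1
      _ ≤ (1 + t) * ‖m (i + 1) - m i‖ ^ 2 + (1 + 1 / t) * (2 * (d i + d (i + 1))) := by
          gcongr
      _ = (1 + t) * ‖m (i + 1) - m i‖ ^ 2 + 2 * (1 + 1 / t) * (d i + d (i + 1)) := by ring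
  -- sum the pointwise bound
  have hsum : ∑ i ∈ Finset.range T, ‖s (i + 1) - s i‖ ^ 2 ≤
      (1 + t) * ∑ i ∈ Finset.range T, ‖m (i + 1) - m i‖ ^ 2
        + 2 * (1 + 1 / t) * ∑ i ∈ Finset.range T, (d i + d (i + 1)) := by
    rw [Finset.mul_sum, Finset.mul_sum, ← Finset.sum_add_distrib]
    exact Finset.sum_le_sum fun i _ => hpt i
  -- bound the shifted sum
  have hshift : ∑ i ∈ Finset.range T, (d i + d (i + 1)) ≤
      2 * ∑ i ∈ Finset.range (T + 1), d i := by
    rw [Finset.sum_add_distrib, two_mul]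
    refine add_le_add ?_ ?_
    · exact Finset.sum_le_sum_of_subset_of_nonneg
        (Finset.range_subset_range.mpr (Nat.le_succ T)) (fun i _ _ => by positivity)
    · rw [Finset.sum_range_succ' d T]
      have : 0 ≤ d 0 := by positivity
      linarith
  set A : ℝ := ∑ i ∈ Finset.range T, ‖m (i + 1) - m i‖ ^ 2 with hA
  set B : ℝ := ∑ i ∈ Finset.range (T + 1), d i with hB
  have hA0 : 0 ≤ A := Finset.sum_nonneg fun i _ => by positivity
  have hB0 : 0 ≤ B := Finset.sum_nonneg fun i _ => by positivity
  have hS : ∑ i ∈ Finset.range T, ‖s (i + 1) - s i‖ ^ 2 ≤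
      (1 + t) * A + 2 * (1 + 1 / t) * (2 * B) := by
    refine hsum.trans ?_
    gcongr
  have hfin : (T : ℝ) * ((1 + t) * A + 2 * (1 + 1 / t) * (2 * B)) =
      (1 + 4 * T / lam) * ((T : ℝ) * A + lam * B) := by
    rw [ht_def]
    field_simp
    ring
  calc (T : ℝ) * ∑ i ∈ Finset.range T, ‖s (i + 1) - s i‖ ^ 2
      ≤ (T : ℝ) * ((1 + t) * A + 2 * (1 + 1 / t) * (2 * B)) := by
        exact mul_le_mul_of_nonneg_left hS hT0.le
    _ = (1 + 4 * T / lam) * ((T : ℝ) * A + lam * B) := hfin
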